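/- In a live-path graph with fixed negative seed set N₀, the cardinality function f(S) = |IBS(S)| on finite vertex sets is monotone and submodular: for all S ⊆ T and x ∉ T ∪ N₀, f(S) ≤ f(T) and f(S ∪ {x}) − f(S) ≥ f(T ∪ {x}) − f(T). -/

import Mathlib

variable {V : Type*}

/-- There is a walk of length `n` (number of edges) from `u` to `w` along relation `E`. -/
inductive PathLen (E : V → V → Prop) : V → V → ℕ → Prop
  | refl (v : V) : PathLen E v v 0
  | tail {u v w : V} {n : ℕ} : PathLen E u v n → E v w → PathLen E u w (n + 1)

/-- Shortest-path distance (number of edges) from the set `S` to `v` along edges `E`,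
`⊤` if no path exists. -/
noncomputable def eDist (E : V → V → Prop) (S : Set V) (v : V) : ℕ∞ :=
  sInf {n : ℕ∞ | ∃ m : ℕ, n = (m : ℕ∞) ∧ ∃ s ∈ S, PathLen E s v m}

/-- An edge relation is "live-path" if every vertex has at most one in-edge. -/
def LivePathRel (E : V → V → Prop) : Prop :=
  ∀ ⦃u u' v : V⦄, E u v → E u' v → u = u'

/-- `l` is a path (list of successive vertices) along `E` from `s` to `v`. -/
def IsPathFrom (E : V → V → Prop) (l : List V) (s v : V) : Prop :=
  l.Chain' E ∧ l.head? = some s ∧ l.getLast? = some v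

/-- `l` is a shortest path along `E` from the set `S` to `v`:
it starts at some node of `S`, ends at `v`, and its number of edges equals `eDist E S v`. -/
def IsShortestPath (E : V → V → Prop) (S : Set V) (v : V) (l : List V) : Prop :=
  (∃ s ∈ S, IsPathFrom E l s v) ∧ (l.length : ℕ∞) = eDist E S v + 1

/-- `v` is negatively activated (-active) under positive seeds `S` and negative seeds `N₀`. -/
def NegActive (pos neg : V → V → Prop) (N₀ S : Set V) (v : V) : Prop :=
  eDist neg N₀ v < ⊤ ∧ eDist neg N₀ v ≤ eDist pos S v

/-- Influence blocking set: vertices -active with empty positive seed set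
but not -active with positive seed set `S`. -/
def IBS (pos neg : V → V → Prop) (N₀ S : Set V) : Set V :=
  {v | NegActive pos neg N₀ ∅ v ∧ ¬ NegActive pos neg N₀ S v}


lemma eDist_anti (E : V → V → Prop) {A B : Set V} (h : A ⊆ B) (v : V) :
    eDist E B v ≤ eDist E A v :=
  sInf_le_sInf (fun n ⟨m, hm, s, hs, hp⟩ => ⟨m, hm, s, h hs, hp⟩)

lemma eDist_union (E : V → V → Prop) (A B : Set V) (v : V) :
    eDist E (A ∪ B) v = min (eDist E A v) (eDist E B v) := by
  unfold eDist
  rw [← sInf_union]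
  congr 1
  ext n
  constructor
  · rintro ⟨m, rfl, s, hs | hs, hp⟩
    · exact Or.inl ⟨m, rfl, s, hs, hp⟩
    · exact Or.inr ⟨m, rfl, s, hs, hp⟩
  · rintro (⟨m, rfl, s, hs, hp⟩ | ⟨m, rfl, s, hs, hp⟩)
    exacts [⟨m, rfl, s, Or.inl hs, hp⟩, ⟨m, rfl, s, Or.inr hs, hp⟩]

lemma eDist_empty (E : V → V → Prop) (v : V) : eDist E ∅ v = ⊤ := by
  unfold eDist
  suffices h : {n : ℕ∞ | ∃ m : ℕ, n = (m : ℕ∞) ∧ ∃ s ∈ (∅ : Set V), PathLen E s v m} = ∅ by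
    rw [h]; exact sInf_empty
  ext n
  simp

lemma mem_IBS_iff (pos neg : V → V → Prop) (N₀ S : Set V) (v : V) :
    v ∈ IBS pos neg N₀ S ↔
      eDist neg N₀ v < ⊤ ∧ eDist pos S v < eDist neg N₀ v := by
  constructor
  · rintro ⟨⟨h1, _⟩, h2⟩
    refine ⟨h1, ?_⟩
    by_contra h
    exact h2 ⟨h1, not_lt.mp h⟩
  · rintro ⟨h1, h2⟩
    exact ⟨⟨h1, by rw [eDist_empty]; exact le_top⟩, fun h => absurd h.2 (not_le.mpr h2)⟩

/-- The cardinality function `S ↦ |IBS(S)|` is monotone and submodular. -/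
theorem stmt6 [Fintype V] (pos neg : V → V → Prop)
    (hpos : LivePathRel pos) (hneg : LivePathRel neg)
    (N₀ S T : Set V) (hST : S ⊆ T) (x : V) (hx : x ∉ T ∪ N₀) :
    (IBS pos neg N₀ S).ncard ≤ (IBS pos neg N₀ T).ncard ∧
    ((IBS pos neg N₀ (T ∪ {x})).ncard : ℝ) - ((IBS pos neg N₀ T).ncard : ℝ) ≤
      ((IBS pos neg N₀ (S ∪ {x})).ncard : ℝ) - ((IBS pos neg N₀ S).ncard : ℝ) := by
  have hsub : ∀ {A B : Set V}, A ⊆ B → IBS pos neg N₀ A ⊆ IBS pos neg N₀ B := by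
    intro A B hAB v hv
    rw [mem_IBS_iff] at hv ⊢
    exact ⟨hv.1, lt_of_le_of_lt (eDist_anti pos hAB v) hv.2⟩
  have hfin : ∀ A : Set V, (IBS pos neg N₀ A).Finite := fun A => Set.toFinite _
  refine ⟨Set.ncard_le_ncard (hsub hST) (hfin T), ?_⟩
  have hdiff : IBS pos neg N₀ (T ∪ {x}) \ IBS pos neg N₀ T ⊆
      IBS pos neg N₀ (S ∪ {x}) \ IBS pos neg N₀ S := by
    rintro v ⟨h1, h2⟩
    rw [mem_IBS_iff, eDist_union] at h1
    have hTd : eDist neg N₀ v ≤ eDist pos T v := by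
      by_contra h
      exact h2 ((mem_IBS_iff pos neg N₀ T v).mpr ⟨h1.1, not_le.mp h⟩)
    have hxlt : eDist pos {x} v < eDist neg N₀ v := by
      rcases min_cases (eDist pos T v) (eDist pos {x} v) with ⟨he, _⟩ | ⟨he, _⟩
      · exact absurd (lt_of_le_of_lt hTd (he ▸ h1.2)) (lt_irrefl _)
      · exact he ▸ h1.2
    constructor
    · rw [mem_IBS_iff, eDist_union]
      exact ⟨h1.1, lt_of_le_of_lt (min_le_right _ _) hxlt⟩
    · intro hv
      rw [mem_IBS_iff] at hv
      exact absurd (lt_of_lt_of_le hv.2 (le_trans hTd (eDist_anti pos hST v)))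
        (lt_irrefl _)
  have e1 := Set.ncard_diff (hsub (Set.subset_union_left : T ⊆ T ∪ {x})) (hfin _)
  have e2 := Set.ncard_diff (hsub (Set.subset_union_left : S ⊆ S ∪ {x})) (hfin _)
  have hle := Set.ncard_le_ncard hdiff ((hfin _).diff)
  have m1 := Set.ncard_le_ncard (hsub (Set.subset_union_left : T ⊆ T ∪ {x})) (hfin _)
  have m2 := Set.ncard_le_ncard (hsub (Set.subset_union_left : S ⊆ S ∪ {x})) (hfin _)
  have c1 := congrArg (Nat.cast : ℕ → ℝ) e1
  have c2 := congrArg (Nat.cast : ℕ → ℝ) e2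
  rw [Nat.cast_sub m1] at c1
  rw [Nat.cast_sub m2] at c2
  have := (Nat.cast_le (α := ℝ)).mpr hle
  linarith
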